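/- Let P ⊆ [0,1]^d be a convex set and let K = {(λ, λx) : x ∈ P, λ ≥ 0} ⊆ ℝ^{d+1} be its homogenization. Suppose x̄ ∈ P has the property that for every j with 0 < x̄_j < 1, both x̄^{(j)} ∈ P and x̄^{(j)} + e_j ∈ P, where x̄^{(j)} = x̄ − x̄_j e_j. Then there exists a symmetric positive semidefinite (d+1)×(d+1) matrix Y with Y e_0 = diag(Y) = (1, x̄), and Y e_i ∈ K, Y(e_0 − e_i) ∈ K for all i ∈ {1,...,d}; that is, x̄ ∈ N_+(P). -/

import Mathlib

def homog (d : ℕ) (P : Set (Fin d → ℝ)) : Set (Fin (d + 1) → ℝ) :=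
  {y | ∃ (l : ℝ) (x : Fin d → ℝ), 0 ≤ l ∧ x ∈ P ∧ y = l • (Fin.cons 1 x : Fin (d + 1) → ℝ)}

lemma vecMulVec_posSemidef {n : Type*} [Fintype n] (v : n → ℝ) :
    (Matrix.vecMulVec v v).PosSemidef := by
  simpa using Matrix.posSemidef_vecMulVec_self_star v

theorem stmt17 (d : ℕ) (P : Set (Fin d → ℝ))
    (hPbox : ∀ x ∈ P, ∀ i, 0 ≤ x i ∧ x i ≤ 1) (hPconv : Convex ℝ P)
    (xb : Fin d → ℝ) (hxb : xb ∈ P)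
    (h : ∀ j : Fin d, 0 < xb j → xb j < 1 →
      Function.update xb j 0 ∈ P ∧ Function.update xb j 1 ∈ P) :
    ∃ Y : Matrix (Fin (d + 1)) (Fin (d + 1)) ℝ, Y.IsSymm ∧ Y.PosSemidef ∧
      Y.mulVec (Pi.single 0 1) = Matrix.diag Y ∧
      Matrix.diag Y = Fin.cons 1 xb ∧
      ∀ i : Fin d, Y.mulVec (Pi.single i.succ 1) ∈ homog d P ∧
        Y.mulVec (Pi.single 0 1 - Pi.single i.succ 1) ∈ homog d P := by
  set v : Fin (d + 1) → ℝ := Fin.cons 1 xb with hv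
  set Y : Matrix (Fin (d + 1)) (Fin (d + 1)) ℝ :=
    Matrix.vecMulVec v v + Matrix.diagonal (fun i => v i * (1 - v i)) with hY
  have hv0 : v 0 = 1 := rfl
  have hvs : ∀ i : Fin d, v i.succ = xb i := fun i => rfl
  have hvr : ∀ i, 0 ≤ v i ∧ v i ≤ 1 := by
    intro i
    refine Fin.cases ?_ ?_ i
    · simp [hv0]
    · intro j; exact hPbox xb hxb j
  have hYe : ∀ i j, Y i j = v i * v j + if i = j then v i * (1 - v i) else 0 := by
    intro i j
    simp [hY, Matrix.add_apply, Matrix.vecMulVec_apply, Matrix.diagonal_apply]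
  refine ⟨Y, ?_, ?_, ?_, ?_, ?_⟩
  · ext i j
    simp only [Matrix.transpose_apply, hYe]
    rcases eq_or_ne i j with rfl | hij
    · ring
    · simp [hij, Ne.symm hij, mul_comm]
  · refine (vecMulVec_posSemidef v).add (Matrix.posSemidef_diagonal_iff.mpr ?_)
    intro i
    have := hvr i
    nlinarith [this.1, this.2]
  · ext i
    simp only [Matrix.mulVec_single_one, Matrix.col_apply, Matrix.diag_apply, mul_one]
    rcases eq_or_ne i 0 with rfl | hi
    · rw [hYe]
    · rw [hYe, hYe, if_neg hi, if_pos rfl, hv0]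
      ring
  · ext i
    rw [Matrix.diag, hYe, if_pos rfl]
    have : v i * v i + v i * (1 - v i) = v i := by ring
    rw [this]
  · intro i
    have hcol : Y.mulVec (Pi.single i.succ 1) = fun k => Y k i.succ := by
      rw [Matrix.mulVec_single_one]; rfl
    have hcol0 : Y.mulVec (Pi.single 0 1) = fun k => Y k 0 := by
      rw [Matrix.mulVec_single_one]; rfl
    have hxi := hPbox xb hxb i
    constructor
    · rcases eq_or_lt_of_le hxi.1 with h0 | h0
      · -- xb i = 0, column is 0
        refine ⟨0, xb, le_refl 0, hxb, ?_⟩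
        rw [hcol]
        ext k
        simp only [Pi.smul_apply, zero_smul]
        rw [hYe]
        rcases eq_or_ne k i.succ with rfl | hk
        · simp [hvs, ← h0]
        · simp [hk, hvs, ← h0]
      rcases eq_or_lt_of_le hxi.2 with h1 | h1
      · -- xb i = 1, column is v
        refine ⟨1, xb, zero_le_one, hxb, ?_⟩
        rw [hcol]
        ext k
        rw [hYe]
        simp only [one_smul, ← hv]
        rcases eq_or_ne k i.succ with rfl | hk
        · rw [if_pos rfl, hvs, h1]; ring
        · rw [if_neg hk, hvs, h1]; ring
      · refine ⟨xb i, Function.update xb i 1, hxi.1, (h i h0 h1).2, ?_⟩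
        rw [hcol]
        ext k
        rw [hYe]
        simp only [Pi.smul_apply, smul_eq_mul]
        refine Fin.cases ?_ ?_ k
        · rw [if_neg (Ne.symm (Fin.succ_ne_zero i)), hv0, hvs, Fin.cons_zero]
          ring
        · intro m
          rcases eq_or_ne m i with rfl | hm
          · rw [if_pos rfl, hvs, Fin.cons_succ, Function.update_self]
            ring
          · have hne : (m.succ : Fin (d + 1)) ≠ i.succ := by
              simpa [Fin.succ_inj] using hm
            rw [if_neg hne, hvs, hvs, Fin.cons_succ, Function.update_of_ne hm]
            ring
    · have hdiff : Y.mulVec (Pi.single 0 1 - Pi.single i.succ 1)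
          = fun k => Y k 0 - Y k i.succ := by
        rw [Matrix.mulVec_sub, hcol, hcol0]
        rfl
      rcases eq_or_lt_of_le hxi.2 with h1 | h1
      · -- xb i = 1, difference is 0
        refine ⟨0, xb, le_refl 0, hxb, ?_⟩
        rw [hdiff]
        ext k
        simp only [Pi.smul_apply, zero_smul]
        rw [hYe, hYe]
        rcases eq_or_ne k i.succ with rfl | hk
        · rw [if_neg (Fin.succ_ne_zero i), if_pos rfl, hvs, hv0, h1]
          ring
        · rcases eq_or_ne k 0 with rfl | hk0
          · rw [if_pos rfl, if_neg hk, hv0, hvs, h1]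
            ring
          · rw [if_neg hk0, if_neg hk, hv0, hvs, h1]
            ring
      rcases eq_or_lt_of_le hxi.1 with h0 | h0
      · -- xb i = 0, difference is v
        refine ⟨1, xb, zero_le_one, hxb, ?_⟩
        rw [hdiff]
        ext k
        rw [hYe, hYe]
        simp only [one_smul, ← hv]
        rcases eq_or_ne k i.succ with rfl | hk
        · rw [if_neg (Fin.succ_ne_zero i), if_pos rfl, hvs, hv0, ← h0]
          ring
        · rcases eq_or_ne k 0 with rfl | hk0
          · rw [if_pos rfl, if_neg hk, hv0, hvs, ← h0]
            ring
          · rw [if_neg hk0, if_neg hk, hv0, hvs, ← h0]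
            ring
      · refine ⟨1 - xb i, Function.update xb i 0, by linarith, (h i h0 h1).1, ?_⟩
        rw [hdiff]
        ext k
        rw [hYe, hYe]
        simp only [Pi.smul_apply, smul_eq_mul]
        refine Fin.cases ?_ ?_ k
        · rw [if_pos rfl, if_neg (Ne.symm (Fin.succ_ne_zero i)), hv0, hvs, Fin.cons_zero]
          ring
        · intro m
          rcases eq_or_ne m i with rfl | hm
          · rw [if_neg (Fin.succ_ne_zero m), if_pos rfl, hvs, hv0, Fin.cons_succ,
              Function.update_self]
            ring
          · have hne : (m.succ : Fin (d + 1)) ≠ i.succ := by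
              simpa [Fin.succ_inj] using hm
            rw [if_neg (Fin.succ_ne_zero m), if_neg hne, hvs, hvs, hv0, Fin.cons_succ,
              Function.update_of_ne hm]
            ring
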